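/- Let K be an arbitrary commutative ring. The multilinear (multidegree (1,...,1)) component of K[V^m]^{S_n} has a free K-basis consisting of the products [w_1]···[w_r] with r ≤ n, where {w_1,...,w_r} ranges over partitions of the variable set {x(1),...,x(m)} into r nonempty blocks, w_i being the product of the variables in block i. -/

import Mathlib

open MvPolynomial

/-- `f` is invariant under the `S_n`-action permuting the index `j`. -/
def IsMultiSymm {K : Type*} [CommRing K] {m n : ℕ} (f : MvPolynomial (Fin m × Fin n) K) :
    Prop :=
  ∀ σ : Equiv.Perm (Fin n), rename (fun p : Fin m × Fin n => (p.1, σ p.2)) f = f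

/-- `f` is multilinear: every monomial of `f` has degree exactly `1` in each group of
variables `x(i)_1, …, x(i)_n`. -/
def IsMultilinear {K : Type*} [CommRing K] {m n : ℕ}
    (f : MvPolynomial (Fin m × Fin n) K) : Prop :=
  ∀ d ∈ f.support, ∀ i : Fin m, (∑ j : Fin n, d (i, j)) = 1

/-- For a set `b` of indices, the multilinear polarized power sum
`[∏_{i ∈ b} x(i)] = ∑_{j=1}^n ∏_{i ∈ b} x(i)_j`. -/
noncomputable def sqfreePowerSum (K : Type*) [CommRing K] (m n : ℕ) (b : Finset (Fin m)) :
    MvPolynomial (Fin m × Fin n) K :=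
  ∑ j : Fin n, ∏ i ∈ b, X (i, j)

open Finset
namespace MMB
variable {K : Type*} [CommRing K] {m n : ℕ}

noncomputable def deg (g : Fin m → Fin n) : (Fin m × Fin n) →₀ ℕ :=
  ∑ i : Fin m, Finsupp.single (i, g i) 1

lemma deg_apply (g : Fin m → Fin n) (p : Fin m × Fin n) :
    deg g p = if g p.1 = p.2 then 1 else 0 := by
  classical
  rw [deg, Finset.sum_apply']
  rw [Finset.sum_eq_single p.1 (fun i _ hi => by
    simp [Finsupp.single_apply, Prod.ext_iff]; exact fun h => absurd h hi) (by simp)]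
  simp [Finsupp.single_apply, Prod.ext_iff, eq_comm]

lemma deg_injective : Function.Injective (deg (m := m) (n := n)) := by
  intro g g' h
  funext i
  by_contra hne
  have h1 : deg g (i, g i) = deg g' (i, g i) := by rw [h]
  rw [deg_apply, deg_apply] at h1
  rw [if_pos rfl, if_neg (fun hh : g' i = (i, g i).2 => hne hh.symm)] at h1
  exact one_ne_zero h1


noncomputable def mono (K : Type*) [CommRing K] (g : Fin m → Fin n) :
    MvPolynomial (Fin m × Fin n) K :=
  monomial (deg g) 1

lemma monomial_finset_prod {σ : Type*} {ι : Type*} (t : Finset ι) (d : ι → (σ →₀ ℕ)) :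
    (∏ i ∈ t, monomial (d i) (1 : K)) = monomial (∑ i ∈ t, d i) 1 := by
  classical
  induction t using Finset.induction with
  | empty => simp
  | insert a s hx ih => rw [Finset.prod_insert hx, Finset.sum_insert hx, ih,
      monomial_mul, one_mul]

/-- The partition of `Fin m` into fibers of `g`. -/
def kerDec (g : Fin m → Fin n) : DecidableRel (Setoid.ker g).r :=
  fun a b => decidable_of_iff (g a = g b) Iff.rfl

noncomputable def fiberPart (g : Fin m → Fin n) : Finpartition (univ : Finset (Fin m)) :=
  @Finpartition.ofSetoid (Fin m) _ _ (Setoid.ker g) (kerDec g)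

lemma mem_fiberPart_part {g : Fin m → Fin n} {i j : Fin m} :
    j ∈ (fiberPart g).part i ↔ g i = g j :=
  @Finpartition.mem_part_ofSetoid_iff_rel (Fin m) _ i _ (Setoid.ker g) (kerDec g) j

/-- `P = Q` if they have the same part function. -/
lemma finpartition_ext {P Q : Finpartition (univ : Finset (Fin m))}
    (h : ∀ i, P.part i = Q.part i) : P = Q := by
  ext b
  constructor
  · intro hb
    obtain ⟨i, _, hi⟩ := P.part_surjOn hb
    rw [← hi, h]
    exact Q.part_mem.2 (mem_univ i)
  · intro hb
    obtain ⟨i, _, hi⟩ := Q.part_surjOn hb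
    rw [← hi, ← h]
    exact P.part_mem.2 (mem_univ i)

end MMB

namespace MMB
variable {K : Type*} [CommRing K] {m n : ℕ}

/-- `g` is constant on each part of `P`. -/
def Const (P : Finpartition (univ : Finset (Fin m))) (g : Fin m → Fin n) : Prop :=
  ∀ ⦃b⦄, b ∈ P.parts → ∀ ⦃i⦄, i ∈ b → ∀ ⦃j⦄, j ∈ b → g i = g j

lemma le_fiberPart_iff {P : Finpartition (univ : Finset (Fin m))} {g : Fin m → Fin n} :
    P ≤ fiberPart g ↔ Const P g := by
  constructor
  · intro hle b hb i hi j hj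
    obtain ⟨c, hc, hbc⟩ := hle hb
    have hci : i ∈ c := hbc hi
    have : c = (fiberPart g).part i := ((fiberPart g).part_eq_of_mem hc hci).symm
    exact mem_fiberPart_part.1 (this ▸ hbc hj)
  · intro hc b hb
    obtain ⟨i, hi⟩ := Finpartition.nonempty_of_mem_parts _ hb
    refine ⟨(fiberPart g).part i, (fiberPart g).part_mem.2 (mem_univ i), fun j hj => ?_⟩
    exact mem_fiberPart_part.2 (hc hb hi hj)

lemma const_self (g : Fin m → Fin n) : Const (fiberPart g) g :=
  le_fiberPart_iff.1 le_rfl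

lemma fiberPart_part_eq (g : Fin m → Fin n) (i : Fin m) :
    (fiberPart g).part i = univ.filter (fun k => g k = g i) := by
  ext k
  simp only [mem_filter, mem_univ, true_and]
  rw [mem_fiberPart_part, eq_comm]

lemma fiberPart_card_le (g : Fin m → Fin n) : (fiberPart g).parts.card ≤ n := by
  classical
  have hsurj : Set.SurjOn (fun j => univ.filter (fun k => g k = j))
      ((univ.image g : Finset (Fin n)) : Set (Fin n)) ((fiberPart g).parts : Set (Finset (Fin m))) := by
    intro b hb
    obtain ⟨i, _, hi⟩ := (fiberPart g).part_surjOn hb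
    exact ⟨g i, by simp, by rw [← hi, fiberPart_part_eq]⟩
  calc (fiberPart g).parts.card ≤ (univ.image g).card :=
        Finset.card_le_card_of_surjOn _ hsurj
    _ ≤ (univ : Finset (Fin n)).card := Finset.card_le_univ _
    _ = n := by simp
end MMB

namespace MMB
variable {K : Type*} [CommRing K] {m n : ℕ}

lemma exists_fiberPart_eq {Q : Finpartition (univ : Finset (Fin m))} (hQ : Q.parts.card ≤ n) :
    ∃ g : Fin m → Fin n, fiberPart g = Q := by
  classical
  have hcard : Fintype.card ↥Q.parts ≤ Fintype.card (Fin n) := by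
    simpa [Fintype.card_coe] using hQ
  obtain ⟨e⟩ := Function.Embedding.nonempty_iff_card_le.2 hcard
  refine ⟨fun i => e ⟨Q.part i, Q.part_mem.2 (mem_univ i)⟩, ?_⟩
  apply finpartition_ext
  intro i
  ext j
  rw [mem_fiberPart_part]
  constructor
  · intro h
    have hp : Q.part i = Q.part j := congrArg Subtype.val (e.injective h)
    rw [hp]
    exact Q.mem_part (mem_univ j)
  · intro hj
    have hp : Q.part j = Q.part i :=
      (Q.mem_part_iff_part_eq_part (mem_univ j) (mem_univ i)).1 hj
    exact congrArg e (Subtype.ext hp.symm)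
end MMB

namespace MMB
variable {K : Type*} [CommRing K] {m n : ℕ}

/-- the function determined by a choice of value for each part -/
noncomputable def gOf (P : Finpartition (univ : Finset (Fin m))) (h : ↥P.parts → Fin n) :
    Fin m → Fin n :=
  fun i => h ⟨P.part i, P.part_mem.2 (mem_univ i)⟩

lemma deg_gOf (P : Finpartition (univ : Finset (Fin m))) (h : ↥P.parts → Fin n) :
    deg (gOf P h) = ∑ b : ↥P.parts, ∑ i ∈ b.1, Finsupp.single (i, h b) (1 : ℕ) := by
  classical
  rw [deg]
  have h1 : ∑ i : Fin m, Finsupp.single (i, gOf P h i) (1 : ℕ)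
      = ∑ b ∈ P.parts, ∑ i ∈ b, Finsupp.single (i, gOf P h i) 1 := by
    have h2 := Finset.sum_biUnion (f := fun i => Finsupp.single (i, gOf P h i) (1 : ℕ))
      P.supIndep.pairwiseDisjoint
    simp only [id] at h2
    rw [← h2]
    exact (Finset.sum_congr P.biUnion_parts (fun _ _ => rfl)).symm
  rw [h1, ← Finset.sum_coe_sort]
  refine Finset.sum_congr rfl fun b _ => Finset.sum_congr rfl fun i hi => ?_
  have hpart : P.part i = b.1 := P.part_eq_of_mem b.2 hi
  have : gOf P h i = h b := congrArg h (Subtype.ext hpart)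
  rw [this]

open scoped Classical in
lemma prod_sqfree_eq (P : Finpartition (univ : Finset (Fin m))) :
    (∏ b ∈ P.parts, sqfreePowerSum K m n b)
      = ∑ g ∈ univ.filter (fun g : Fin m → Fin n => Const P g), mono K g := by
  classical
  -- step 1: rewrite each factor as a sum of monomials
  have hfac : ∀ b : Finset (Fin m), sqfreePowerSum K m n b
      = ∑ j : Fin n, monomial (∑ i ∈ b, Finsupp.single (i, j) (1 : ℕ)) (1 : K) := by
    intro b
    unfold sqfreePowerSum
    refine Finset.sum_congr rfl fun j _ => ?_
    rw [← monomial_finset_prod]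
    refine Finset.prod_congr rfl fun i _ => ?_
    have := X_pow_eq_monomial (n := (i, j)) (e := 1) (R := K)
    rwa [pow_one] at this
  -- step 2: expand the product of sums
  have h2 : (∏ b ∈ P.parts, sqfreePowerSum K m n b)
      = ∑ h : ↥P.parts → Fin n, mono K (gOf P h) := by
    rw [← Finset.prod_coe_sort]
    calc (∏ b : ↥P.parts, sqfreePowerSum K m n b.1)
        = ∏ b : ↥P.parts, ∑ j : Fin n,
            monomial (∑ i ∈ b.1, Finsupp.single (i, j) (1 : ℕ)) (1 : K) :=
          Finset.prod_congr rfl fun b _ => hfac b.1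
      _ = ∑ h ∈ Fintype.piFinset (fun _ : ↥P.parts => (univ : Finset (Fin n))),
            ∏ b : ↥P.parts, monomial (∑ i ∈ b.1, Finsupp.single (i, h b) (1 : ℕ)) (1 : K) :=
          Finset.prod_univ_sum _ _
      _ = ∑ h : ↥P.parts → Fin n, mono K (gOf P h) := by
          rw [Fintype.piFinset_univ]
          refine Finset.sum_congr rfl fun h _ => ?_
          rw [monomial_finset_prod, mono, deg_gOf]
  rw [h2]
  -- step 3: reindex by the induced functions
  refine Finset.sum_nbij' (fun h => gOf P h)
    (fun g => fun b => g (P.nonempty_of_mem_parts b.2).choose) ?_ ?_ ?_ ?_ ?_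
  · intro h _
    simp only [mem_filter, mem_univ, true_and]
    intro b hb i hi j hj
    exact congrArg h (Subtype.ext ((P.part_eq_of_mem hb hi).trans (P.part_eq_of_mem hb hj).symm))
  · intro g _
    exact mem_univ _
  · intro h _
    funext b
    have hc := (P.nonempty_of_mem_parts b.2).choose_spec
    exact congrArg h (Subtype.ext (P.part_eq_of_mem b.2 hc))
  · intro g hg
    simp only [mem_filter, mem_univ, true_and] at hg
    funext i
    have hb : P.part i ∈ P.parts := P.part_mem.2 (mem_univ i)
    exact hg hb (P.nonempty_of_mem_parts hb).choose_spec (P.mem_part (mem_univ i))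
  · intro h _
    rfl
end MMB

namespace MMB
variable {K : Type*} [CommRing K] {m n : ℕ}

lemma coeff_mono (g g' : Fin m → Fin n) :
    coeff (deg g) (mono K g') = if g' = g then 1 else 0 := by
  classical
  rw [mono, coeff_monomial]
  by_cases h : g' = g
  · rw [if_pos h, if_pos (congrArg deg h)]
  · rw [if_neg h, if_neg (fun hd => h (deg_injective hd))]

open scoped Classical in
lemma coeff_prod_sqfree (P : Finpartition (univ : Finset (Fin m))) (g : Fin m → Fin n) :
    coeff (deg g) (∏ b ∈ P.parts, sqfreePowerSum K m n b)
      = if Const P g then 1 else 0 := by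
  classical
  rw [prod_sqfree_eq, coeff_sum]
  rw [Finset.sum_congr rfl (fun g' _ => coeff_mono g g')]
  rw [Finset.sum_ite_eq' (univ.filter fun g' : Fin m → Fin n => Const P g') g (fun _ => (1 : K))]
  simp only [mem_filter, mem_univ, true_and]

lemma sum_deg (g : Fin m → Fin n) (i : Fin m) : (∑ j : Fin n, deg g (i, j)) = 1 := by
  simp [deg_apply]

lemma mapDomain_deg (σ : Equiv.Perm (Fin n)) (g : Fin m → Fin n) :
    Finsupp.mapDomain (fun p : Fin m × Fin n => (p.1, σ p.2)) (deg g)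
      = deg (fun i => σ (g i)) := by
  rw [deg, deg, ← Finsupp.mapDomain.addMonoidHom_apply, map_sum]
  simp only [Finsupp.mapDomain.addMonoidHom_apply, Finsupp.mapDomain_single]

lemma sum_eq_one_unique {h : Fin n → ℕ} (hh : (∑ j, h j) = 1) :
    ∃ j, h j = 1 ∧ ∀ j', j' ≠ j → h j' = 0 := by
  classical
  have hex : ∃ j, h j ≠ 0 := by
    by_contra hno
    push_neg at hno
    rw [Finset.sum_eq_zero (fun j _ => hno j)] at hh
    omega
  obtain ⟨j, hj⟩ := hex
  have h1 : h j ≤ 1 := hh ▸ Finset.single_le_sum (f := h) (fun _ _ => Nat.zero_le _) (mem_univ j)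
  refine ⟨j, by omega, fun j' hj' => ?_⟩
  have hpair : h j + h j' = ∑ x ∈ ({j, j'} : Finset (Fin n)), h x :=
    (Finset.sum_pair (fun hjj => hj' hjj.symm)).symm
  have hle : (∑ x ∈ ({j, j'} : Finset (Fin n)), h x) ≤ ∑ x, h x :=
    Finset.sum_le_sum_of_subset (subset_univ _)
  omega

lemma exists_deg_of_multilinear {f : MvPolynomial (Fin m × Fin n) K}
    (hf : ∀ d ∈ f.support, ∀ i : Fin m, (∑ j : Fin n, d (i, j)) = 1)
    {d : (Fin m × Fin n) →₀ ℕ} (hd : d ∈ f.support) : ∃ g : Fin m → Fin n, deg g = d := by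
  classical
  choose j hj1 hj0 using fun i => sum_eq_one_unique (hf d hd i)
  refine ⟨j, ?_⟩
  ext p
  rw [deg_apply]
  by_cases hp : j p.1 = p.2
  · rw [if_pos hp]
    have := hj1 p.1
    rw [hp] at this
    exact this.symm
  · rw [if_neg hp]
    exact (hj0 p.1 p.2 (fun hh => hp hh.symm)).symm

end MMB

namespace MMB
variable {K : Type*} [CommRing K] {m n : ℕ}

lemma exists_perm_comp {β γ : Type*} [Fintype β] [Fintype γ] {u v : β → γ}
    (hu : Function.Injective u) (hv : Function.Injective v) :
    ∃ σ : Equiv.Perm γ, ∀ b, σ (u b) = v b := by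
  classical
  have hcard : Fintype.card (↥(Set.range u)ᶜ) = Fintype.card (↥(Set.range v)ᶜ) := by
    rw [Fintype.card_compl_set, Fintype.card_compl_set,
      Set.card_range_of_injective hu, Set.card_range_of_injective hv]
  let eu := Equiv.ofInjective u hu
  let ev := Equiv.ofInjective v hv
  let ψ : (↥(Set.range u)ᶜ) ≃ (↥(Set.range v)ᶜ) := Fintype.equivOfCardEq hcard
  refine ⟨(Equiv.Set.sumCompl (Set.range u)).symm.trans
    (((eu.symm.trans ev).sumCongr ψ).trans (Equiv.Set.sumCompl (Set.range v))), fun b => ?_⟩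
  simp only [Equiv.trans_apply]
  rw [Equiv.Set.sumCompl_symm_apply_of_mem (Set.mem_range_self b)]
  have h1 : eu.symm ⟨u b, Set.mem_range_self b⟩ = b := by
    rw [Equiv.symm_apply_eq]
    rfl
  simp only [Equiv.sumCongr_apply, Sum.map_inl, Equiv.trans_apply, h1,
    Equiv.Set.sumCompl_apply_inl]
  rfl

lemma exists_perm_of_fiberPart_eq {g g' : Fin m → Fin n} (h : fiberPart g = fiberPart g') :
    ∃ σ : Equiv.Perm (Fin n), ∀ i, σ (g i) = g' i := by
  classical
  have key : ∀ i i', g i = g i' ↔ g' i = g' i' := by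
    intro i i'
    rw [← mem_fiberPart_part, h, mem_fiberPart_part]
  set Q := fiberPart g with hQ
  have hrep : ∀ b : ↥Q.parts, ∃ i, i ∈ b.1 := fun b =>
    (Q.nonempty_of_mem_parts b.2).exists_mem  -- fix below maybe
  let rep : ↥Q.parts → Fin m := fun b => (Q.nonempty_of_mem_parts b.2).choose
  have hrepmem : ∀ b : ↥Q.parts, rep b ∈ b.1 := fun b => (Q.nonempty_of_mem_parts b.2).choose_spec
  -- same part iff same g-value
  have hsame : ∀ i, rep ⟨Q.part i, Q.part_mem.2 (mem_univ i)⟩ ∈ Q.part i :=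
    fun i => hrepmem ⟨Q.part i, Q.part_mem.2 (mem_univ i)⟩
  have hval : ∀ i, g (rep ⟨Q.part i, Q.part_mem.2 (mem_univ i)⟩) = g i :=
    fun i => (mem_fiberPart_part.1 (hsame i)).symm
  have hval' : ∀ i, g' (rep ⟨Q.part i, Q.part_mem.2 (mem_univ i)⟩) = g' i :=
    fun i => (key _ _).1 (hval i)
  -- injectivity of the value maps on parts
  have hinj : Function.Injective (fun b : ↥Q.parts => g (rep b)) := by
    intro b b' hbb
    have h1 : rep b' ∈ Q.part (rep b) := mem_fiberPart_part.2 hbb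
    have h2 : Q.part (rep b) = b.1 := Q.part_eq_of_mem b.2 (hrepmem b)
    exact Subtype.ext (Q.eq_of_mem_parts b.2 b'.2 (h2 ▸ h1) (hrepmem b')).symm ▸ rfl
  have hinj' : Function.Injective (fun b : ↥Q.parts => g' (rep b)) := by
    intro b b' hbb
    have hbb2 : g (rep b) = g (rep b') := (key _ _).2 hbb
    exact hinj hbb2
  obtain ⟨σ, hσ⟩ := exists_perm_comp hinj hinj'
  refine ⟨σ, fun i => ?_⟩
  have := hσ ⟨Q.part i, Q.part_mem.2 (mem_univ i)⟩
  rw [hval i, hval' i] at this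
  exact this
end MMB

namespace MMB
variable {K : Type*} [CommRing K] {m n : ℕ}

lemma coeff_orbit_eq {f : MvPolynomial (Fin m × Fin n) K} (hf : IsMultiSymm f)
    {g g' : Fin m → Fin n} (h : fiberPart g = fiberPart g') :
    coeff (deg g') f = coeff (deg g) f := by
  obtain ⟨σ, hσ⟩ := exists_perm_of_fiberPart_eq h
  have hinj : Function.Injective (fun p : Fin m × Fin n => (p.1, σ p.2)) := by
    intro p q hpq
    rw [Prod.ext_iff] at hpq ⊢
    exact ⟨hpq.1, σ.injective hpq.2⟩
  have := coeff_rename_mapDomain _ hinj f (deg g)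
  rw [hf σ, mapDomain_deg] at this
  have hgg' : (fun i => σ (g i)) = g' := funext hσ
  rw [hgg'] at this
  exact this

lemma ml_decomp {f : MvPolynomial (Fin m × Fin n) K} (hf : IsMultilinear f) :
    f = ∑ g : Fin m → Fin n, coeff (deg g) f • mono K g := by
  classical
  apply MvPolynomial.ext
  intro d
  rw [coeff_sum]
  by_cases hd : ∃ g : Fin m → Fin n, deg g = d
  · obtain ⟨g0, rfl⟩ := hd
    rw [Finset.sum_eq_single g0]
    · rw [coeff_smul, coeff_mono, if_pos rfl, smul_eq_mul, mul_one]
    · intro g _ hg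
      rw [coeff_smul, coeff_mono, if_neg hg, smul_eq_mul, mul_zero]
    · intro hg0
      exact absurd (mem_univ g0) hg0
  · have h0 : coeff d f = 0 := by
      by_contra hc
      exact hd (exists_deg_of_multilinear hf (by rwa [MvPolynomial.mem_support_iff]))
    rw [h0]
    symm
    apply Finset.sum_eq_zero
    intro g _
    rw [coeff_smul, mono, coeff_monomial, if_neg (fun hh => hd ⟨g, hh⟩), smul_eq_mul, mul_zero]

lemma isMultiSymm_prod (P : Finpartition (univ : Finset (Fin m))) :
    IsMultiSymm (∏ b ∈ P.parts, sqfreePowerSum K m n b) := by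
  intro σ
  rw [map_prod]
  refine Finset.prod_congr rfl fun b _ => ?_
  unfold sqfreePowerSum
  rw [map_sum]
  have h1 : ∀ j : Fin n, (rename fun p : Fin m × Fin n => (p.1, σ p.2))
      (∏ i ∈ b, X (i, j)) = (∏ i ∈ b, X (i, σ j) : MvPolynomial (Fin m × Fin n) K) := by
    intro j
    rw [map_prod]
    exact Finset.prod_congr rfl fun i _ => rename_X _ _
  rw [Finset.sum_congr rfl fun j _ => h1 j]
  exact Equiv.sum_comp σ (fun j => (∏ i ∈ b, X (i, j) : MvPolynomial (Fin m × Fin n) K))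

lemma isMultilinear_prod (P : Finpartition (univ : Finset (Fin m))) :
    IsMultilinear (∏ b ∈ P.parts, sqfreePowerSum K m n b) := by
  classical
  intro d hd i
  rw [prod_sqfree_eq] at hd
  have := MvPolynomial.support_sum hd
  rw [Finset.mem_biUnion] at this
  obtain ⟨g, -, hg⟩ := this
  have hsub : (mono K g).support ⊆ {deg g} := by
    rw [mono]
    classical
    refine subset_trans (MvPolynomial.support_monomial_subset) (by rfl)
  have : d = deg g := Finset.mem_singleton.1 (hsub hg)
  rw [this]
  exact sum_deg g i

end MMB

namespace MMB
variable {K : Type*} [CommRing K] {m n : ℕ}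

open scoped Classical in
noncomputable def orbitSum (K : Type*) [CommRing K] (m n : ℕ)
    (Q : Finpartition (univ : Finset (Fin m))) : MvPolynomial (Fin m × Fin n) K :=
  ∑ g ∈ univ.filter (fun g : Fin m → Fin n => fiberPart g = Q), mono K g

open scoped Classical in
lemma prod_eq_sum_orbit (P : Finpartition (univ : Finset (Fin m))) :
    (∏ b ∈ P.parts, sqfreePowerSum K m n b)
      = ∑ Q ∈ univ.filter (fun Q : Finpartition (univ : Finset (Fin m)) => P ≤ Q),
          orbitSum K m n Q := by
  classical
  rw [prod_sqfree_eq]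
  rw [← Finset.sum_fiberwise_of_maps_to (g := fiberPart)
    (t := univ.filter fun Q : Finpartition (univ : Finset (Fin m)) => P ≤ Q)
    (fun g hg => by
      simp only [mem_filter, mem_univ, true_and] at hg ⊢
      exact le_fiberPart_iff.2 hg)]
  refine Finset.sum_congr rfl fun Q hQ => ?_
  simp only [mem_filter, mem_univ, true_and] at hQ
  rw [orbitSum, Finset.filter_filter]
  refine Finset.sum_congr (Finset.filter_congr fun g _ => ?_) fun _ _ => rfl
  constructor
  · exact fun h => h.2
  · intro h
    exact ⟨le_fiberPart_iff.1 (h ▸ hQ), h⟩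

lemma card_le_of_le {P Q : Finpartition (univ : Finset (Fin m))} (h : P ≤ Q) :
    Q.parts.card ≤ P.parts.card := by
  classical
  apply Finset.card_le_card_of_surjOn
    (fun b : Finset (Fin m) => if hb : b.Nonempty then Q.part hb.choose else ∅)
  intro c hc
  simp only [Finset.mem_coe] at hc
  obtain ⟨x, hx⟩ := Q.nonempty_of_mem_parts hc
  have hbmem : P.part x ∈ P.parts := P.part_mem.2 (mem_univ x)
  have hbne : (P.part x).Nonempty := ⟨x, P.mem_part (mem_univ x)⟩
  refine ⟨P.part x, by simpa using hbmem, ?_⟩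
  simp only [dif_pos hbne]
  have hy : hbne.choose ∈ P.part x := hbne.choose_spec
  obtain ⟨c', hc', hsub⟩ := h hbmem
  have h1 : Q.part hbne.choose = c' := Q.part_eq_of_mem hc' (hsub hy)
  have h2 : Q.part x = c' := Q.part_eq_of_mem hc' (hsub (P.mem_part (mem_univ x)))
  have h3 : Q.part x = c := Q.part_eq_of_mem hc hx
  rw [h1, ← h2, h3]

open scoped Classical in
lemma filter_le_eq_insert (Q : Finpartition (univ : Finset (Fin m))) :
    (univ.filter fun Q' : Finpartition (univ : Finset (Fin m)) => Q ≤ Q')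
      = insert Q (univ.filter fun Q' => Q < Q') := by
  ext Q'
  simp only [mem_filter, mem_univ, true_and, mem_insert]
  rw [le_iff_lt_or_eq]
  constructor
  · rintro (h | h)
    · exact Or.inr h
    · exact Or.inl h.symm
  · rintro (h | h)
    · exact Or.inr h.symm
    · exact Or.inl h

open scoped Classical in
lemma orbitSum_mem_span :
    ∀ Q : Finpartition (univ : Finset (Fin m)), Q.parts.card ≤ n →
    orbitSum K m n Q ∈ Submodule.span K (Set.range
      (fun P : {P : Finpartition (Finset.univ : Finset (Fin m)) // P.parts.card ≤ n} =>
        ∏ b ∈ P.1.parts, sqfreePowerSum K m n b)) := by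
  intro Q
  induction Q using WellFoundedGT.induction with
  | _ Q IH =>
    intro hQ
    have hA := prod_eq_sum_orbit (K := K) (n := n) Q
    rw [filter_le_eq_insert, Finset.sum_insert (by simp)] at hA
    have hsub : orbitSum K m n Q
        = (∏ b ∈ Q.parts, sqfreePowerSum K m n b)
          - ∑ Q' ∈ univ.filter (fun Q' : Finpartition (univ : Finset (Fin m)) => Q < Q'),
              orbitSum K m n Q' := by
      rw [hA]; ring
    rw [hsub]
    apply Submodule.sub_mem
    · exact Submodule.subset_span ⟨⟨Q, hQ⟩, rfl⟩
    · apply Submodule.sum_mem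
      intro Q' hQ'
      simp only [mem_filter, mem_univ, true_and] at hQ'
      exact IH Q' hQ' (le_trans (card_le_of_le hQ'.le) hQ)

end MMB

namespace MMB
variable {K : Type*} [CommRing K] {m n : ℕ}

lemma props_zero : IsMultiSymm (0 : MvPolynomial (Fin m × Fin n) K)
    ∧ IsMultilinear (0 : MvPolynomial (Fin m × Fin n) K) := by
  constructor
  · intro σ; rw [map_zero]
  · intro d hd
    simp at hd

lemma props_add {f g : MvPolynomial (Fin m × Fin n) K}
    (hf : IsMultiSymm f ∧ IsMultilinear f) (hg : IsMultiSymm g ∧ IsMultilinear g) :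
    IsMultiSymm (f + g) ∧ IsMultilinear (f + g) := by
  constructor
  · intro σ; rw [map_add, hf.1 σ, hg.1 σ]
  · intro d hd i
    classical
    rcases Finset.mem_union.1 (MvPolynomial.support_add hd) with h | h
    · exact hf.2 d h i
    · exact hg.2 d h i

lemma props_smul (a : K) {f : MvPolynomial (Fin m × Fin n) K}
    (hf : IsMultiSymm f ∧ IsMultilinear f) :
    IsMultiSymm (a • f) ∧ IsMultilinear (a • f) := by
  constructor
  · intro σ
    rw [map_smul, hf.1 σ]
  · intro d hd i
    exact hf.2 d (MvPolynomial.support_smul hd) i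

open scoped Classical in
theorem main_thm
    (K : Type*) [CommRing K] (m n : ℕ) :
    LinearIndependent K
      (fun P : {P : Finpartition (Finset.univ : Finset (Fin m)) // P.parts.card ≤ n} =>
        ∏ b ∈ P.1.parts, sqfreePowerSum K m n b) ∧
    (Submodule.span K (Set.range
      (fun P : {P : Finpartition (Finset.univ : Finset (Fin m)) // P.parts.card ≤ n} =>
        ∏ b ∈ P.1.parts, sqfreePowerSum K m n b)) :
      Set (MvPolynomial (Fin m × Fin n) K)) =
      {f | IsMultiSymm f ∧ IsMultilinear f} := by
  classical
  constructor
  · rw [Fintype.linearIndependent_iff]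
    intro c hc
    have key : ∀ Q : Finpartition (univ : Finset (Fin m)), ∀ hQ : Q.parts.card ≤ n,
        c ⟨Q, hQ⟩ = 0 := by
      intro Q
      induction Q using WellFoundedLT.induction with
      | _ Q IH =>
        intro hQ
        obtain ⟨gQ, hgQ⟩ := exists_fiberPart_eq hQ
        have h0 := congrArg (coeff (deg gQ)) hc
        rw [coeff_zero, coeff_sum] at h0
        have h1 : ∀ P : {P : Finpartition (Finset.univ : Finset (Fin m)) // P.parts.card ≤ n},
            coeff (deg gQ) (c P • ∏ b ∈ P.1.parts, sqfreePowerSum K m n b)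
            = if P.1 ≤ Q then c P else 0 := by
          intro P
          rw [coeff_smul, coeff_prod_sqfree, smul_eq_mul]
          have hiff : Const P.1 gQ ↔ P.1 ≤ Q := by
            rw [← le_fiberPart_iff, hgQ]
          by_cases hle : P.1 ≤ Q
          · rw [if_pos (hiff.2 hle), if_pos hle, mul_one]
          · rw [if_neg (fun hcst => hle (hiff.1 hcst)), if_neg hle, mul_zero]
        rw [Finset.sum_congr rfl (fun P _ => h1 P), Finset.sum_ite, Finset.sum_const_zero,
          add_zero] at h0
        rw [Finset.sum_eq_single_of_mem (⟨Q, hQ⟩ :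
            {P : Finpartition (Finset.univ : Finset (Fin m)) // P.parts.card ≤ n})
          (by simp) ?_] at h0
        · exact h0
        · intro P hP hne
          simp only [mem_filter, mem_univ, true_and] at hP
          have hlt : P.1 < Q := lt_of_le_of_ne hP (fun he => hne (Subtype.ext he))
          exact IH P.1 hlt P.2
    exact fun P => key P.1 P.2
  · ext f
    simp only [SetLike.mem_coe, Set.mem_setOf_eq]
    constructor
    · intro hf
      refine Submodule.span_induction ?_ ?_ ?_ ?_ hf
      · rintro x ⟨P, rfl⟩
        exact ⟨isMultiSymm_prod P.1, isMultilinear_prod P.1⟩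
      · exact props_zero
      · exact fun x y _ _ hx hy => props_add hx hy
      · exact fun a x _ hx => props_smul a hx
    · rintro ⟨hs, hl⟩
      rw [ml_decomp hl]
      rw [← Finset.sum_fiberwise_of_maps_to (g := fiberPart)
        (t := univ.filter fun Q : Finpartition (univ : Finset (Fin m)) => Q.parts.card ≤ n)
        (fun g _ => by simp [fiberPart_card_le])]
      apply Submodule.sum_mem
      intro Q hQ
      simp only [mem_filter, mem_univ, true_and] at hQ
      obtain ⟨gQ, hgQ⟩ := exists_fiberPart_eq hQ
      have hcongr : ∀ g ∈ univ.filter (fun g : Fin m → Fin n => fiberPart g = Q),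
          coeff (deg g) f • mono K g = coeff (deg gQ) f • mono K g := by
        intro g hg
        simp only [mem_filter, mem_univ, true_and] at hg
        rw [coeff_orbit_eq hs (hgQ.trans hg.symm)]
      rw [Finset.sum_congr rfl hcongr, ← Finset.smul_sum]
      exact Submodule.smul_mem _ _ (orbitSum_mem_span Q hQ)
end MMB

/-- Over an arbitrary commutative ring `K`, the multilinear component of `K[V^m]^{S_n}`
has a free `K`-basis consisting of the products `[w₁]⋯[w_r]` with `r ≤ n`, where
`{w₁, …, w_r}` ranges over the partitions of the variable set `{x(1), …, x(m)}` into `r`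
nonempty blocks and `w_i` is the product of the variables in the `i`-th block. -/
theorem multilinear_multisymm_basis
    (K : Type*) [CommRing K] (m n : ℕ) :
    LinearIndependent K
      (fun P : {P : Finpartition (Finset.univ : Finset (Fin m)) // P.parts.card ≤ n} =>
        ∏ b ∈ P.1.parts, sqfreePowerSum K m n b) ∧
    (Submodule.span K (Set.range
      (fun P : {P : Finpartition (Finset.univ : Finset (Fin m)) // P.parts.card ≤ n} =>
        ∏ b ∈ P.1.parts, sqfreePowerSum K m n b)) :
      Set (MvPolynomial (Fin m × Fin n) K)) =
      {f | IsMultiSymm f ∧ IsMultilinear f} :=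
  MMB.main_thm K m n
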